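/- Let T > 0, d ∈ ℕ, and let X : [0,T] × ℝ^d → ℝ^d be twice continuously differentiable (jointly in (t,x)) with div X(t,·) = 0 for every t ∈ [0,T], i.e. Σ_i ∂_{x_i} X^i(t,x) = 0 for all (t,x). For (s,t) ∈ Δ_T and x ∈ ℝ^d define the canonical second level 𝕃^i_{st}(x) := Σ_μ ∫_s^t ∂_r X^μ(r,x) (∂_μ X^i(r,x) − ∂_μ X^i(s,x)) dr, and the bracket coefficient V^i_{st}(x) := 𝕃^i_{st}(x) − ½ Σ_μ (X^μ(t,x) − X^μ(s,x)) ∂_μ(X^i(t,x) − X^i(s,x)). Then div V_{st} = Σ_i ∂_{x_i} V^i_{st}(x) = 0 for all (s,t) ∈ Δ_T and all x ∈ ℝ^d. -/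

import Mathlib

/-- The `i`-th partial derivative of `f : ℝ^d → ℝ` at `x`. -/
noncomputable def partialD (d : ℕ) (f : (Fin d → ℝ) → ℝ) (i : Fin d)
    (x : Fin d → ℝ) : ℝ :=
  fderiv ℝ f x (Pi.single i 1)

/-- The canonical second level
`𝕃^i_{st}(x) = Σ_μ ∫_s^t ∂_r X^μ(r,x) (∂_μ X^i(r,x) − ∂_μ X^i(s,x)) dr`. -/
noncomputable def canonicalL (d : ℕ) (X : ℝ → (Fin d → ℝ) → Fin d → ℝ)
    (s t : ℝ) (x : Fin d → ℝ) (i : Fin d) : ℝ :=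
  ∑ μ : Fin d, ∫ r in s..t,
    deriv (fun u => X u x μ) r *
      (partialD d (fun y => X r y i) μ x - partialD d (fun y => X s y i) μ x)

/-- The bracket coefficient
`V^i_{st}(x) = 𝕃^i_{st}(x) − ½ Σ_μ X^μ_{st}(x) ∂_μ X^i_{st}(x)`. -/
noncomputable def bracketCoeff (d : ℕ) (X : ℝ → (Fin d → ℝ) → Fin d → ℝ)
    (s t : ℝ) (x : Fin d → ℝ) (i : Fin d) : ℝ :=
  canonicalL d X s t x i -
    (1 / 2) * ∑ μ : Fin d,
      (X t x μ - X s x μ) * partialD d (fun y => X t y i - X s y i) μ x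

set_option synthInstance.maxHeartbeats 1000000
set_option maxHeartbeats 1000000
set_option linter.unusedVariables false

open MeasureTheory intervalIntegral ContinuousLinearMap Set Metric

section aux
variable {E F : Type*} [NormedAddCommGroup E] [NormedSpace ℝ E]
  [NormedAddCommGroup F] [NormedSpace ℝ F]

lemma hasFDerivAt_slice {g : ℝ × E → F} {a : ℝ} {y : E}
    (hg : DifferentiableAt ℝ g (a, y)) :
    HasFDerivAt (fun z => g (a, z)) ((fderiv ℝ g (a, y)).comp (inr ℝ ℝ E)) y :=
  hg.hasFDerivAt.comp y (hasFDerivAt_prodMk_right a y)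

lemma hasFDerivAt_intervalIntegral_of_contDiff [ProperSpace E]
    (g : ℝ × E → ℝ) (hg : ContDiff ℝ 1 g) (s t : ℝ) (x : E) :
    HasFDerivAt (fun y => ∫ r in s..t, g (r, y))
      (∫ r in s..t, (fderiv ℝ g (r, x)).comp (inr ℝ ℝ E)) x := by
  have hcont : Continuous fun p : ℝ × E => fderiv ℝ g p := hg.continuous_fderiv one_ne_zero
  obtain ⟨M, hM⟩ := (isCompact_uIcc (a := s) (b := t)).prod
    (isCompact_closedBall x 1) |>.exists_bound_of_continuousOn hcont.continuousOn
  have key := intervalIntegral.hasFDerivAt_integral_of_dominated_of_fderiv_le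
    (F := fun (y : E) (r : ℝ) => g (r, y))
    (F' := fun (y : E) (r : ℝ) => (fderiv ℝ g (r, y)).comp (inr ℝ ℝ E))
    (x₀ := x) (a := s) (b := t) (μ := volume)
    (bound := fun _ => M * ‖(inr ℝ ℝ E : E →L[ℝ] ℝ × E)‖) (ball_mem_nhds x one_pos)
    ?meas ?int ?meas' ?bound ?bi ?diff
  · exact key
  case meas =>
    filter_upwards with y
    exact (hg.continuous.comp (continuous_id.prodMk continuous_const)).aestronglyMeasurable
  case int =>
    exact (hg.continuous.comp (continuous_id.prodMk continuous_const)).intervalIntegrable s t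
  case meas' =>
    exact (((hcont.comp (continuous_id.prodMk continuous_const)).clm_comp
      continuous_const)).aestronglyMeasurable
  case bound =>
    filter_upwards with r hr y hy
    refine (ContinuousLinearMap.opNorm_comp_le _ _).trans ?_
    have : ‖fderiv ℝ g (r, y)‖ ≤ M :=
      hM _ ⟨uIoc_subset_uIcc hr, ball_subset_closedBall hy⟩
    exact mul_le_mul_of_nonneg_right this (norm_nonneg _)
  case bi => exact intervalIntegrable_const
  case diff =>
    filter_upwards with r _ y _
    exact hasFDerivAt_slice (hg.differentiable one_ne_zero (r, y))

end aux


variable {d : ℕ} {X : ℝ → (Fin d → ℝ) → Fin d → ℝ}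

/-- component function -/
def Fc (X : ℝ → (Fin d → ℝ) → Fin d → ℝ) (i : Fin d) : ℝ × (Fin d → ℝ) → ℝ :=
  fun p => X p.1 p.2 i

/-- full space-time derivative of the `i`-th component -/
noncomputable def phi (X : ℝ → (Fin d → ℝ) → Fin d → ℝ) (i : Fin d) :
    ℝ × (Fin d → ℝ) → (ℝ × (Fin d → ℝ) →L[ℝ] ℝ) :=
  fderiv ℝ (Fc X i)

section basic
variable (hX : ContDiff ℝ 2 (fun p : ℝ × (Fin d → ℝ) => X p.1 p.2))
include hX

lemma hFc (i : Fin d) : ContDiff ℝ 2 (Fc X i) :=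
  (ContinuousLinearMap.proj (R := ℝ) (φ := fun _ : Fin d => ℝ) i).contDiff.comp hX

lemma hphi (i : Fin d) : ContDiff ℝ 1 (phi X i) :=
  (hFc hX i).fderiv_right (by norm_num)

lemma hsymm (i : Fin d) (p : ℝ × (Fin d → ℝ)) (v w : ℝ × (Fin d → ℝ)) :
    fderiv ℝ (phi X i) p v w = fderiv ℝ (phi X i) p w v :=
  ((hFc hX i).contDiffAt.isSymmSndFDerivAt (by simp)) v w

lemma partial_eq (r : ℝ) (y : Fin d → ℝ) (i μ : Fin d) :
    partialD d (fun z => X r z i) μ y = phi X i (r, y) (0, Pi.single μ 1) := by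
  have h : HasFDerivAt (fun z => Fc X i (r, z))
      ((fderiv ℝ (Fc X i) (r, y)).comp (inr ℝ ℝ _)) y :=
    hasFDerivAt_slice (((hFc hX i).differentiable (by norm_num)) (r, y))
  show fderiv ℝ (fun z => X r z i) y (Pi.single μ 1) = _
  rw [show (fun z => X r z i) = fun z => Fc X i (r, z) from rfl, h.fderiv]
  simp [phi]

lemma derivt_eq (r : ℝ) (y : Fin d → ℝ) (μ : Fin d) :
    deriv (fun u => X u y μ) r = phi X μ (r, y) (1, 0) := by
  have h : HasDerivAt (fun u => Fc X μ (u, y)) (fderiv ℝ (Fc X μ) (r, y) (1, 0)) r :=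
    by have := HasFDerivAt.comp_hasDerivAt r
          ((((hFc hX μ).differentiable (by norm_num)) (r, y)).hasFDerivAt)
          ((hasDerivAt_id r).prodMk (hasDerivAt_const r y)); exact this
  exact h.deriv

/-- derivative in space of `y ↦ φᵢ (τ, y) w` -/
lemma hasFDerivAt_phi_apply (i : Fin d) (τ : ℝ) (y : Fin d → ℝ) (w : ℝ × (Fin d → ℝ)) :
    HasFDerivAt (fun z => phi X i (τ, z) w)
      (((fderiv ℝ (phi X i) (τ, y)).comp (inr ℝ ℝ _)).flip w) y := by
  have h := (hasFDerivAt_slice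
      (((hphi hX i).differentiable one_ne_zero) (τ, y))).clm_apply
      (hasFDerivAt_const w y)
  rwa [comp_zero, zero_add] at h
end basic

section basic2
variable (hX : ContDiff ℝ 2 (fun p : ℝ × (Fin d → ℝ) => X p.1 p.2))
include hX

/-- derivative in time of `r ↦ φᵢ (r, x) w` -/
lemma hasDerivAt_phi_apply (i : Fin d) (r : ℝ) (x : Fin d → ℝ) (w : ℝ × (Fin d → ℝ)) :
    HasDerivAt (fun u => phi X i (u, x) w) (fderiv ℝ (phi X i) (r, x) (1, 0) w) r := by
  have h : HasDerivAt (fun u => phi X i (u, x)) (fderiv ℝ (phi X i) (r, x) (1, 0)) r :=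
    HasFDerivAt.comp_hasDerivAt r (((hphi hX i).differentiable one_ne_zero) (r, x)).hasFDerivAt
      ((hasDerivAt_id r).prodMk (hasDerivAt_const r x))
  have h2 := h.clm_apply (hasDerivAt_const r w)
  simpa using h2

lemma div_deriv (τ : ℝ) (h0 : ∀ y, ∑ i, phi X i (τ, y) (0, Pi.single i 1) = 0)
    (x : Fin d → ℝ) (μ : Fin d) :
    ∑ i, fderiv ℝ (phi X i) (τ, x) (0, Pi.single i 1) (0, Pi.single μ 1) = 0 := by
  have hsum : HasFDerivAt (fun y => ∑ i, phi X i (τ, y) (0, Pi.single i 1))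
      (∑ i, (((fderiv ℝ (phi X i) (τ, x)).comp (inr ℝ ℝ _)).flip (0, Pi.single i 1))) x :=
    HasFDerivAt.fun_sum fun i _ => hasFDerivAt_phi_apply hX i τ x _
  rw [funext h0] at hsum
  have hz := hsum.unique (hasFDerivAt_const 0 x)
  have happ := congrArg (fun L : (Fin d → ℝ) →L[ℝ] ℝ => L (Pi.single μ 1)) hz
  simp only [ContinuousLinearMap.coe_sum', Finset.sum_apply, flip_apply, comp_apply,
    inr_apply, ContinuousLinearMap.zero_apply] at happ
  rw [Finset.sum_congr rfl fun i _ => hsymm hX i (τ, x) (0, Pi.single i 1) (0, Pi.single μ 1)]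
  exact happ
end basic2

/-- The integrand of `canonicalL`, jointly in space-time. -/
noncomputable def hh (X : ℝ → (Fin d → ℝ) → Fin d → ℝ) (s : ℝ) (i μ : Fin d) :
    ℝ × (Fin d → ℝ) → ℝ :=
  fun p => phi X μ p (1, 0) *
    (phi X i p (0, Pi.single μ 1) - phi X i (s, p.2) (0, Pi.single μ 1))

section basic3
variable (hX : ContDiff ℝ 2 (fun p : ℝ × (Fin d → ℝ) => X p.1 p.2))
include hX

lemma hh_contDiff (s : ℝ) (i μ : Fin d) : ContDiff ℝ 1 (hh X s i μ) := by
  refine ((hphi hX μ).clm_apply contDiff_const).mul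
    ((((hphi hX i).clm_apply contDiff_const)).sub ?_)
  exact ((hphi hX i).comp (contDiff_const.prodMk contDiff_snd)).clm_apply contDiff_const

lemma canonicalL_eq (s t : ℝ) (y : Fin d → ℝ) (i : Fin d) :
    canonicalL d X s t y i = ∑ μ : Fin d, ∫ r in s..t, hh X s i μ (r, y) := by
  unfold canonicalL hh
  refine Finset.sum_congr rfl fun μ _ => ?_
  refine intervalIntegral.integral_congr fun r _ => ?_
  rw [partial_eq hX, partial_eq hX, derivt_eq hX]

/-- value of the space derivative of the integrand of `canonicalL`. -/
lemma hh_fderiv (s : ℝ) (i μ : Fin d) (r : ℝ) (x : Fin d → ℝ) (j : Fin d) :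
    fderiv ℝ (hh X s i μ) (r, x) (0, Pi.single j 1) =
      fderiv ℝ (phi X μ) (r, x) (0, Pi.single j 1) (1, 0) *
        (phi X i (r, x) (0, Pi.single μ 1) - phi X i (s, x) (0, Pi.single μ 1)) +
      phi X μ (r, x) (1, 0) *
        (fderiv ℝ (phi X i) (r, x) (0, Pi.single j 1) (0, Pi.single μ 1) -
         fderiv ℝ (phi X i) (s, x) (0, Pi.single j 1) (0, Pi.single μ 1)) := by
  have h1 : HasFDerivAt (fun p : ℝ × (Fin d → ℝ) => phi X μ p (1, 0))
      ((fderiv ℝ (phi X μ) (r, x)).flip (1, 0)) (r, x) := by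
    have := (((hphi hX μ).differentiable one_ne_zero) (r, x)).hasFDerivAt.clm_apply
      (hasFDerivAt_const (1, 0) (r, x))
    rwa [comp_zero, zero_add] at this
  have h2 : HasFDerivAt (fun p : ℝ × (Fin d → ℝ) => phi X i p (0, Pi.single μ 1))
      ((fderiv ℝ (phi X i) (r, x)).flip (0, Pi.single μ 1)) (r, x) := by
    have := (((hphi hX i).differentiable one_ne_zero) (r, x)).hasFDerivAt.clm_apply
      (hasFDerivAt_const (0, Pi.single μ 1) (r, x))
    rwa [comp_zero, zero_add] at this
  have hsnd : HasFDerivAt (fun p : ℝ × (Fin d → ℝ) => (s, p.2))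
      ((0 : (ℝ × (Fin d → ℝ)) →L[ℝ] ℝ).prod (ContinuousLinearMap.snd ℝ ℝ (Fin d → ℝ)))
      (r, x) := (hasFDerivAt_const s (r, x)).prodMk hasFDerivAt_snd
  have h3' : HasFDerivAt (fun p : ℝ × (Fin d → ℝ) => phi X i p (0, Pi.single μ 1))
      ((fderiv ℝ (phi X i) (s, x)).flip (0, Pi.single μ 1)) (s, x) := by
    have := (((hphi hX i).differentiable one_ne_zero) (s, x)).hasFDerivAt.clm_apply
      (hasFDerivAt_const (0, Pi.single μ 1) (s, x))
    rwa [comp_zero, zero_add] at this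
  have h3 : HasFDerivAt (fun p : ℝ × (Fin d → ℝ) => phi X i (s, p.2) (0, Pi.single μ 1))
      (((fderiv ℝ (phi X i) (s, x)).flip (0, Pi.single μ 1)).comp
        ((0 : (ℝ × (Fin d → ℝ)) →L[ℝ] ℝ).prod (ContinuousLinearMap.snd ℝ ℝ (Fin d → ℝ))))
      (r, x) := by have := h3'.comp (r, x) hsnd; exact this
  have hmul := h1.fun_mul (h2.fun_sub h3)
  unfold hh
  rw [hmul.fderiv]
  simp only [ContinuousLinearMap.add_apply, ContinuousLinearMap.smul_apply,
    ContinuousLinearMap.sub_apply, flip_apply, comp_apply, ContinuousLinearMap.prod_apply,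
    ContinuousLinearMap.zero_apply, ContinuousLinearMap.coe_snd', smul_eq_mul]
  ring
end basic3

section basic4
variable (hX : ContDiff ℝ 2 (fun p : ℝ × (Fin d → ℝ) => X p.1 p.2))
include hX

lemma partial_sub (t s : ℝ) (i μ : Fin d) (y : Fin d → ℝ) :
    partialD d (fun z => X t z i - X s z i) μ y =
      phi X i (t, y) (0, Pi.single μ 1) - phi X i (s, y) (0, Pi.single μ 1) := by
  have h1 : HasFDerivAt (fun z => Fc X i (t, z))
      ((fderiv ℝ (Fc X i) (t, y)).comp (inr ℝ ℝ _)) y :=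
    hasFDerivAt_slice (((hFc hX i).differentiable (by norm_num)) (t, y))
  have h2 : HasFDerivAt (fun z => Fc X i (s, z))
      ((fderiv ℝ (Fc X i) (s, y)).comp (inr ℝ ℝ _)) y :=
    hasFDerivAt_slice (((hFc hX i).differentiable (by norm_num)) (s, y))
  show fderiv ℝ (fun z => Fc X i (t, z) - Fc X i (s, z)) y (Pi.single μ 1) = _
  rw [(h1.fun_sub h2).fderiv]
  simp [phi]

/-- continuity in `r` of `r ↦ φᵢ (r,x) w` -/
lemma cont_phi (i : Fin d) (x : Fin d → ℝ) (w : ℝ × (Fin d → ℝ)) :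
    Continuous fun r : ℝ => phi X i (r, x) w :=
  (((hphi hX i).continuous).comp (continuous_id.prodMk continuous_const)).clm_apply
    continuous_const

lemma cont_dphi (i : Fin d) (x : Fin d → ℝ) (v w : ℝ × (Fin d → ℝ)) :
    Continuous fun r : ℝ => fderiv ℝ (phi X i) (r, x) v w :=
  (((((hphi hX i).continuous_fderiv one_ne_zero)).comp
    (continuous_id.prodMk continuous_const)).clm_apply continuous_const).clm_apply
    continuous_const

lemma cont_hh_fderiv (s : ℝ) (i μ : Fin d) (x : Fin d → ℝ) (j : Fin d) :
    Continuous fun r : ℝ => fderiv ℝ (hh X s i μ) (r, x) (0, Pi.single j 1) :=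
  (((((hh_contDiff hX s i μ).continuous_fderiv one_ne_zero)).comp
    (continuous_id.prodMk continuous_const)).clm_apply continuous_const)

end basic4

lemma alg_swap {n : ℕ} (f : Fin n → Fin n → ℝ) :
    ∑ i, ∑ μ, f i μ = ∑ i, ∑ μ, f μ i := Finset.sum_comm

lemma alg_final {n : ℕ} (a b : Fin n → Fin n → ℝ) :
    (∑ i, ∑ μ, ((1/2) * (a μ i * a i μ) - a μ i * b i μ))
      - (∑ i, ∑ μ, ((1/2) * (b μ i * b i μ) - b μ i * b i μ))
      - (1/2) * ∑ i, ∑ μ, ((a μ i - b μ i) * (a i μ - b i μ)) = 0 := by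
  have h1 : ∑ i : Fin n, ∑ μ : Fin n, a μ i * b i μ
      = ∑ i : Fin n, ∑ μ : Fin n, b μ i * a i μ := by
    rw [alg_swap fun i μ => a μ i * b i μ]
    exact Finset.sum_congr rfl fun i _ => Finset.sum_congr rfl fun μ _ => mul_comm _ _
  have expand : ∀ i μ : Fin n,
      ((1/2) * (a μ i * a i μ) - a μ i * b i μ)
        - ((1/2) * (b μ i * b i μ) - b μ i * b i μ)
        - (1/2) * ((a μ i - b μ i) * (a i μ - b i μ))
      = (1/2) * (b μ i * a i μ) - (1/2) * (a μ i * b i μ) := by intro i μ; ring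
  calc (∑ i, ∑ μ, ((1/2) * (a μ i * a i μ) - a μ i * b i μ))
      - (∑ i, ∑ μ, ((1/2) * (b μ i * b i μ) - b μ i * b i μ))
      - (1/2) * ∑ i, ∑ μ, ((a μ i - b μ i) * (a i μ - b i μ))
      = ∑ i, ∑ μ, (((1/2) * (a μ i * a i μ) - a μ i * b i μ)
        - ((1/2) * (b μ i * b i μ) - b μ i * b i μ)
        - (1/2) * ((a μ i - b μ i) * (a i μ - b i μ))) := by
        simp only [Finset.mul_sum, ← Finset.sum_sub_distrib]
    _ = ∑ i, ∑ μ, ((1/2) * (b μ i * a i μ) - (1/2) * (a μ i * b i μ)) :=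
        Finset.sum_congr rfl fun i _ => Finset.sum_congr rfl fun μ _ => expand i μ
    _ = 0 := by
        simp only [Finset.sum_sub_distrib, ← Finset.mul_sum, h1, sub_self]

/-- `A_{iμ}(τ) = ∂_μ X^i (τ, x)` -/
noncomputable def Aa (X : ℝ → (Fin d → ℝ) → Fin d → ℝ) (x : Fin d → ℝ)
    (τ : ℝ) (i μ : Fin d) : ℝ := phi X i (τ, x) (0, Pi.single μ 1)

/-- time derivative of `Aa` -/
noncomputable def Ad (X : ℝ → (Fin d → ℝ) → Fin d → ℝ) (x : Fin d → ℝ)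
    (r : ℝ) (i μ : Fin d) : ℝ := fderiv ℝ (phi X i) (r, x) (1, 0) (0, Pi.single μ 1)

noncomputable def Gg (X : ℝ → (Fin d → ℝ) → Fin d → ℝ) (x : Fin d → ℝ)
    (s r : ℝ) : ℝ :=
  ∑ i, ∑ μ, ((1/2) * (Aa X x r μ i * Aa X x r i μ) - Aa X x r μ i * Aa X x s i μ)

noncomputable def Ggd (X : ℝ → (Fin d → ℝ) → Fin d → ℝ) (x : Fin d → ℝ)
    (s r : ℝ) : ℝ :=
  ∑ i, ∑ μ, ((1/2) * (Ad X x r μ i * Aa X x r i μ + Aa X x r μ i * Ad X x r i μ)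
    - Ad X x r μ i * Aa X x s i μ)

section basic5
variable (hX : ContDiff ℝ 2 (fun p : ℝ × (Fin d → ℝ) => X p.1 p.2))
include hX

lemma hGg_deriv (x : Fin d → ℝ) (s r : ℝ) : HasDerivAt (Gg X x s) (Ggd X x s r) r := by
  refine HasDerivAt.fun_sum fun i _ => HasDerivAt.fun_sum fun μ _ => ?_
  have t1 : HasDerivAt (fun r => Aa X x r μ i) (Ad X x r μ i) r :=
    hasDerivAt_phi_apply hX μ r x (0, Pi.single i 1)
  have t2 : HasDerivAt (fun r => Aa X x r i μ) (Ad X x r i μ) r :=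
    hasDerivAt_phi_apply hX i r x (0, Pi.single μ 1)
  exact ((t1.mul t2).const_mul (1/2)).sub (t1.mul_const (Aa X x s i μ))

lemma cont_Ggd (x : Fin d → ℝ) (s : ℝ) : Continuous (Ggd X x s) := by
  refine continuous_finset_sum _ fun i _ => continuous_finset_sum _ fun μ _ => ?_
  have c1 : Continuous fun r => Aa X x r μ i := cont_phi hX μ x _
  have c2 : Continuous fun r => Aa X x r i μ := cont_phi hX i x _
  have c3 : Continuous fun r => Ad X x r μ i := cont_dphi hX μ x _ _
  have c4 : Continuous fun r => Ad X x r i μ := cont_dphi hX i x _ _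
  exact (continuous_const.mul ((c3.mul c2).add (c1.mul c4))).sub (c3.mul continuous_const)

lemma key1 (s : ℝ) (x : Fin d → ℝ) (r : ℝ)
    (h0r : ∀ y, ∑ i, phi X i (r, y) (0, Pi.single i 1) = 0)
    (h0s : ∀ y, ∑ i, phi X i (s, y) (0, Pi.single i 1) = 0) :
    ∑ i, ∑ μ, fderiv ℝ (hh X s i μ) (r, x) (0, Pi.single i 1) = Ggd X x s r := by
  have hstep : ∀ i μ : Fin d, fderiv ℝ (hh X s i μ) (r, x) (0, Pi.single i 1)
      = Ad X x r μ i * (Aa X x r i μ - Aa X x s i μ)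
        + phi X μ (r, x) (1, 0) *
          (fderiv ℝ (phi X i) (r, x) (0, Pi.single i 1) (0, Pi.single μ 1)
            - fderiv ℝ (phi X i) (s, x) (0, Pi.single i 1) (0, Pi.single μ 1)) := by
    intro i μ
    rw [hh_fderiv hX, hsymm hX μ (r, x) (0, Pi.single i 1) (1, 0)]
    rfl
  have hz : ∑ i : Fin d, ∑ μ : Fin d, phi X μ (r, x) (1, 0) *
      (fderiv ℝ (phi X i) (r, x) (0, Pi.single i 1) (0, Pi.single μ 1)
        - fderiv ℝ (phi X i) (s, x) (0, Pi.single i 1) (0, Pi.single μ 1)) = 0 := by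
    rw [Finset.sum_comm]
    refine Finset.sum_eq_zero fun μ _ => ?_
    rw [← Finset.mul_sum, Finset.sum_sub_distrib, div_deriv hX r h0r x μ,
      div_deriv hX s h0s x μ, sub_zero, mul_zero]
  have hswap : ∑ i : Fin d, ∑ μ : Fin d, Aa X x r μ i * Ad X x r i μ
      = ∑ i : Fin d, ∑ μ : Fin d, Ad X x r μ i * Aa X x r i μ := by
    rw [alg_swap fun i μ => Aa X x r μ i * Ad X x r i μ]
    exact Finset.sum_congr rfl fun i _ => Finset.sum_congr rfl fun μ _ => mul_comm _ _
  calc ∑ i, ∑ μ, fderiv ℝ (hh X s i μ) (r, x) (0, Pi.single i 1)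
      = ∑ i : Fin d, ∑ μ : Fin d, (Ad X x r μ i * (Aa X x r i μ - Aa X x s i μ)
          + phi X μ (r, x) (1, 0) *
            (fderiv ℝ (phi X i) (r, x) (0, Pi.single i 1) (0, Pi.single μ 1)
              - fderiv ℝ (phi X i) (s, x) (0, Pi.single i 1) (0, Pi.single μ 1))) :=
        Finset.sum_congr rfl fun i _ => Finset.sum_congr rfl fun μ _ => hstep i μ
    _ = ∑ i : Fin d, ∑ μ : Fin d, Ad X x r μ i * (Aa X x r i μ - Aa X x s i μ) := by
        simp only [Finset.sum_add_distrib, hz, add_zero]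
    _ = Ggd X x s r := by
        unfold Ggd
        simp only [mul_sub, mul_add, Finset.sum_sub_distrib, Finset.sum_add_distrib,
          ← Finset.mul_sum]
        linear_combination (-(1:ℝ)/2) * hswap

end basic5

/-- If `X : [0,T] × ℝ^d → ℝ^d` is `C²` (jointly) and divergence free in space for
every `t ∈ [0,T]`, then the bracket coefficient of its canonical lift is also
divergence free: `Σ_i ∂_{x_i} V^i_{st}(x) = 0` for all `(s,t) ∈ Δ_T` and `x ∈ ℝ^d`. -/
theorem bracket_div_free (T : ℝ) (hT : 0 < T) (d : ℕ)
    (X : ℝ → (Fin d → ℝ) → Fin d → ℝ)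
    (hX : ContDiff ℝ 2 (fun p : ℝ × (Fin d → ℝ) => X p.1 p.2))
    (hdiv : ∀ t ∈ Set.Icc (0 : ℝ) T, ∀ x : Fin d → ℝ,
      ∑ i : Fin d, partialD d (fun y => X t y i) i x = 0) :
    ∀ s t : ℝ, 0 ≤ s → s ≤ t → t ≤ T → ∀ x : Fin d → ℝ,
      ∑ i : Fin d, partialD d (fun y => bracketCoeff d X s t y i) i x = 0 := by
  intro s t hs hst htT x
  have hsT : s ∈ Set.Icc (0:ℝ) T := ⟨hs, hst.trans htT⟩
  have htT' : t ∈ Set.Icc (0:ℝ) T := ⟨hs.trans hst, htT⟩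
  have h0 : ∀ τ, τ ∈ Set.Icc (0:ℝ) T →
      ∀ y, ∑ i, phi X i (τ, y) (0, Pi.single i 1) = 0 := by
    intro τ hτ y
    have h := hdiv τ hτ y
    rwa [Finset.sum_congr rfl fun i _ => partial_eq hX τ y i i] at h
  -- derivative of the canonical second level
  have hLd : ∀ i : Fin d, HasFDerivAt (fun y => canonicalL d X s t y i)
      (∑ μ, ∫ r in s..t, (fderiv ℝ (hh X s i μ) (r, x)).comp (inr ℝ ℝ (Fin d → ℝ))) x := by
    intro i
    rw [show (fun y => canonicalL d X s t y i)
        = fun y => ∑ μ, ∫ r in s..t, hh X s i μ (r, y) from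
      funext fun y => canonicalL_eq hX s t y i]
    exact HasFDerivAt.fun_sum fun μ _ =>
      hasFDerivAt_intervalIntegral_of_contDiff _ (hh_contDiff hX s i μ) s t x
  have hIntC : ∀ i μ : Fin d, IntervalIntegrable
      (fun r => (fderiv ℝ (hh X s i μ) (r, x)).comp (inr ℝ ℝ (Fin d → ℝ)))
      MeasureTheory.volume s t := fun i μ =>
    (((((hh_contDiff hX s i μ).continuous_fderiv one_ne_zero)).comp
      (continuous_id.prodMk continuous_const)).clm_comp continuous_const).intervalIntegrable s t
  have hLval : ∀ i : Fin d,
      fderiv ℝ (fun y => canonicalL d X s t y i) x (Pi.single i 1)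
      = ∑ μ, ∫ r in s..t, fderiv ℝ (hh X s i μ) (r, x) (0, Pi.single i 1) := by
    intro i
    rw [(hLd i).fderiv]
    rw [ContinuousLinearMap.coe_sum', Finset.sum_apply]
    refine Finset.sum_congr rfl fun μ _ => ?_
    rw [ContinuousLinearMap.intervalIntegral_apply (hIntC i μ) (Pi.single i 1)]
    exact intervalIntegral.integral_congr fun r _ => by simp
  -- sum over i of the L part via FTC
  have hLsum : ∑ i, fderiv ℝ (fun y => canonicalL d X s t y i) x (Pi.single i 1)
      = Gg X x s t - Gg X x s s := by
    rw [Finset.sum_congr rfl fun i _ => hLval i]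
    rw [Finset.sum_congr rfl fun i _ => (intervalIntegral.integral_finset_sum
      (fun μ _ => (cont_hh_fderiv hX s i μ x i).intervalIntegrable s t)).symm]
    rw [← intervalIntegral.integral_finset_sum
      (fun i _ => (continuous_finset_sum _ fun μ _ =>
        cont_hh_fderiv hX s i μ x i).intervalIntegrable s t)]
    rw [intervalIntegral.integral_congr (g := Ggd X x s) ?_]
    · exact intervalIntegral.integral_eq_sub_of_hasDerivAt
        (fun r _ => hGg_deriv hX x s r) ((cont_Ggd hX x s).intervalIntegrable s t)
    · intro r hr
      rw [Set.uIcc_of_le hst] at hr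
      exact key1 hX s x r (h0 r ⟨hs.trans hr.1, hr.2.trans htT⟩) (h0 s hsT)
  -- derivative of the quadratic part
  have hQd : ∀ i : Fin d, HasFDerivAt
      (fun y => ∑ μ, (X t y μ - X s y μ) * partialD d (fun z => X t z i - X s z i) μ y)
      (∑ μ, ((Fc X μ (t, x) - Fc X μ (s, x)) •
          (((fderiv ℝ (phi X i) (t, x)).comp (inr ℝ ℝ (Fin d → ℝ))).flip (0, Pi.single μ 1)
            - ((fderiv ℝ (phi X i) (s, x)).comp (inr ℝ ℝ (Fin d → ℝ))).flip (0, Pi.single μ 1))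
        + (phi X i (t, x) (0, Pi.single μ 1) - phi X i (s, x) (0, Pi.single μ 1)) •
          ((fderiv ℝ (Fc X μ) (t, x)).comp (inr ℝ ℝ (Fin d → ℝ))
            - (fderiv ℝ (Fc X μ) (s, x)).comp (inr ℝ ℝ (Fin d → ℝ))))) x := by
    intro i
    rw [show (fun y => ∑ μ, (X t y μ - X s y μ) *
          partialD d (fun z => X t z i - X s z i) μ y)
        = fun y => ∑ μ, (Fc X μ (t, y) - Fc X μ (s, y)) *
          (phi X i (t, y) (0, Pi.single μ 1) - phi X i (s, y) (0, Pi.single μ 1)) from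
      funext fun y => Finset.sum_congr rfl fun μ _ => by rw [partial_sub hX]; rfl]
    refine HasFDerivAt.fun_sum fun μ _ => ?_
    have f1t : HasFDerivAt (fun y => Fc X μ (t, y))
        ((fderiv ℝ (Fc X μ) (t, x)).comp (inr ℝ ℝ _)) x :=
      hasFDerivAt_slice ((hFc hX μ).differentiable (by norm_num) _)
    have f1s : HasFDerivAt (fun y => Fc X μ (s, y))
        ((fderiv ℝ (Fc X μ) (s, x)).comp (inr ℝ ℝ _)) x :=
      hasFDerivAt_slice ((hFc hX μ).differentiable (by norm_num) _)
    exact (f1t.sub f1s).mul ((hasFDerivAt_phi_apply hX i t x _).sub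
      (hasFDerivAt_phi_apply hX i s x _))
  have hQval : ∀ i : Fin d,
      fderiv ℝ (fun y => ∑ μ, (X t y μ - X s y μ) *
        partialD d (fun z => X t z i - X s z i) μ y) x (Pi.single i 1)
      = ∑ μ, ((Fc X μ (t, x) - Fc X μ (s, x)) *
          (fderiv ℝ (phi X i) (t, x) (0, Pi.single i 1) (0, Pi.single μ 1)
            - fderiv ℝ (phi X i) (s, x) (0, Pi.single i 1) (0, Pi.single μ 1))
        + (Aa X x t i μ - Aa X x s i μ) * (Aa X x t μ i - Aa X x s μ i)) := by
    intro i
    rw [(hQd i).fderiv]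
    rw [ContinuousLinearMap.coe_sum', Finset.sum_apply]
    refine Finset.sum_congr rfl fun μ _ => ?_
    simp only [ContinuousLinearMap.add_apply, ContinuousLinearMap.smul_apply,
      ContinuousLinearMap.sub_apply, ContinuousLinearMap.flip_apply,
      ContinuousLinearMap.comp_apply, ContinuousLinearMap.inr_apply, smul_eq_mul]
    rfl
  have hQsum : ∑ i, fderiv ℝ (fun y => ∑ μ, (X t y μ - X s y μ) *
        partialD d (fun z => X t z i - X s z i) μ y) x (Pi.single i 1)
      = ∑ i : Fin d, ∑ μ : Fin d,
          ((Aa X x t μ i - Aa X x s μ i) * (Aa X x t i μ - Aa X x s i μ)) := by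
    rw [Finset.sum_congr rfl fun i _ => hQval i]
    simp only [Finset.sum_add_distrib]
    have hz : ∑ i : Fin d, ∑ μ : Fin d, (Fc X μ (t, x) - Fc X μ (s, x)) *
        (fderiv ℝ (phi X i) (t, x) (0, Pi.single i 1) (0, Pi.single μ 1)
          - fderiv ℝ (phi X i) (s, x) (0, Pi.single i 1) (0, Pi.single μ 1)) = 0 := by
      rw [Finset.sum_comm]
      refine Finset.sum_eq_zero fun μ _ => ?_
      rw [← Finset.mul_sum, Finset.sum_sub_distrib, div_deriv hX t (h0 t htT') x μ,
        div_deriv hX s (h0 s hsT) x μ, sub_zero, mul_zero]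
    rw [hz, zero_add]
    exact Finset.sum_congr rfl fun i _ => Finset.sum_congr rfl fun μ _ => mul_comm _ _
  -- assemble
  have hBval : ∀ i : Fin d, partialD d (fun y => bracketCoeff d X s t y i) i x
      = fderiv ℝ (fun y => canonicalL d X s t y i) x (Pi.single i 1)
        - (1/2) * fderiv ℝ (fun y => ∑ μ, (X t y μ - X s y μ) *
            partialD d (fun z => X t z i - X s z i) μ y) x (Pi.single i 1) := by
    intro i
    have h2 := (hQd i).const_mul (1/2 : ℝ)
    show fderiv ℝ (fun y => canonicalL d X s t y i - (1/2) * ∑ μ, (X t y μ - X s y μ) *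
      partialD d (fun z => X t z i - X s z i) μ y) x (Pi.single i 1) = _
    rw [((hLd i).fun_sub h2).fderiv]
    rw [ContinuousLinearMap.sub_apply, ContinuousLinearMap.smul_apply, smul_eq_mul,
      ← (hLd i).fderiv, ← (hQd i).fderiv]
  rw [Finset.sum_congr rfl fun i _ => hBval i]
  rw [Finset.sum_sub_distrib, ← Finset.mul_sum, hLsum, hQsum]
  have := alg_final (fun i μ => Aa X x t i μ) (fun i μ => Aa X x s i μ)
  exact this
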